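/- arXiv:1510.03742 — 6 statements merged into one kernel-verified Lean document; each statement's English description precedes it below -/
import Mathlib

section
/- If E and E' are two distinct edge sets on Fin n, then the inner product of the corresponding graph states satisfies |⟨G_E, G_{E'}⟩| ≤ 1/√2; equivalently, |∑_{S : Fin n → Bool} (−1)^{e_E(S) + e_{E'}(S)}| ≤ 2^n / √2. In particular, graph states of distinct graphs are never equal. -/
open Finset

/-- An `n`-qubit state: a vector of amplitudes indexed by bit strings `S : Fin n → Bool`. -/
abbrev QState (n : ℕ) := (Fin n → Bool) → ℂ

open scoped Classical in
/-- `edgeCount E S` is the number of edges of `E` all of whose endpoints `v` satisfy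
`S v = true` (a self-loop `s(v,v)` counts when `S v = true`). -/
noncomputable def edgeCount {n : ℕ} (E : Finset (Sym2 (Fin n))) (S : Fin n → Bool) : ℕ :=
  (E.filter fun e => ∀ v ∈ e, S v = true).card

/-- The graph state `|G_E⟩` of the (multi)graph on `Fin n` with edge set `E`:
its amplitude at `S` is `(-1) ^ (edgeCount E S) * 2 ^ (-n/2)`. -/
noncomputable def graphState {n : ℕ} (E : Finset (Sym2 (Fin n))) : QState n :=
  fun S => (-1 : ℂ) ^ edgeCount E S * (((Real.sqrt 2)⁻¹ ^ n : ℝ) : ℂ)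

/-- Pauli `Z` on qubit `a`:  `(Z_a ψ) S = (-1) ^ (S a) * ψ S`. -/
noncomputable def Zgate {n : ℕ} (a : Fin n) : QState n → QState n :=
  fun ψ S => (if S a then -1 else 1) * ψ S

/-- Pauli `X` on qubit `a`:  `(X_a ψ) S = ψ S'` where `S'` is `S` with bit `a` flipped. -/
noncomputable def Xgate {n : ℕ} (a : Fin n) : QState n → QState n :=
  fun ψ S => ψ (Function.update S a (!S a))

/-- Controlled-`Z` on qubits `a`, `b`:  `(CZ_{a,b} ψ) S = (-1) ^ (S a * S b) * ψ S`. -/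
noncomputable def CZgate {n : ℕ} (a b : Fin n) : QState n → QState n :=
  fun ψ S => (if S a && S b then -1 else 1) * ψ S

/-- Hadamard gate on qubit `a`. -/
noncomputable def Hgate {n : ℕ} (a : Fin n) : QState n → QState n :=
  fun ψ S => ((Real.sqrt 2 : ℝ) : ℂ)⁻¹ *
    ∑ t : Bool, (if S a && t then -1 else 1) * ψ (Function.update S a t)

/-- The neighbourhood `N(v)` of `v` in the graph with edge set `E`. -/
noncomputable def nbhd {n : ℕ} (E : Finset (Sym2 (Fin n))) (v : Fin n) : Finset (Fin n) :=
  Finset.univ.filter fun u => s(u, v) ∈ E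

/-- The inner product `⟨φ, ψ⟩ = ∑ S, conj (φ S) * ψ S`. -/
noncomputable def qInner {n : ℕ} (φ ψ : QState n) : ℂ :=
  ∑ S : Fin n → Bool, (starRingEnd ℂ) (φ S) * ψ S

open scoped Classical in
noncomputable def cnt {n : ℕ} (e : Sym2 (Fin n)) (S : Fin n → Bool) : ℕ :=
  if ∀ v ∈ e, S v = true then 1 else 0

lemma edgeCount_eq_sum {n : ℕ} (E : Finset (Sym2 (Fin n))) (S : Fin n → Bool) :
    edgeCount E S = ∑ e ∈ E, cnt e S := by
  classical
  rw [edgeCount, Finset.card_filter]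
  apply Finset.sum_congr rfl
  intro e _
  simp [cnt]

def bflip {n : ℕ} (a : Fin n) (S : Fin n → Bool) : Fin n → Bool := Function.update S a (!S a)

lemma bflip_apply_self {n : ℕ} (a : Fin n) (S : Fin n → Bool) : bflip a S a = !S a := by
  simp [bflip]

lemma bflip_apply_ne {n : ℕ} (a w : Fin n) (S : Fin n → Bool) (h : w ≠ a) : bflip a S w = S w := by
  simp [bflip, Function.update_of_ne h]

lemma bflip_bflip {n : ℕ} (a : Fin n) (S : Fin n → Bool) : bflip a (bflip a S) = S := by
  funext w
  by_cases h : w = a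
  · subst h; simp [bflip_apply_self]
  · rw [bflip_apply_ne _ _ _ h, bflip_apply_ne _ _ _ h]

lemma bflip_comm {n : ℕ} (a b : Fin n) (h : a ≠ b) (S : Fin n → Bool) :
    bflip a (bflip b S) = bflip b (bflip a S) := by
  funext w
  by_cases ha : w = a
  · subst ha
    rw [bflip_apply_self w (bflip b S), bflip_apply_ne b w S h, bflip_apply_ne b w _ h,
      bflip_apply_self w S]
  · by_cases hb : w = b
    · subst hb
      rw [bflip_apply_ne a w _ (Ne.symm h), bflip_apply_self w S, bflip_apply_self w (bflip a S),
        bflip_apply_ne a w S (Ne.symm h)]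
    · rw [bflip_apply_ne _ _ _ ha, bflip_apply_ne _ _ _ hb, bflip_apply_ne _ _ _ hb,
        bflip_apply_ne _ _ _ ha]

lemma bflip_bijective {n : ℕ} (a : Fin n) : Function.Bijective (bflip (n := n) a) :=
  Function.Involutive.bijective (fun S => bflip_bflip a S)

lemma cnt_mk {n : ℕ} (a b : Fin n) (S : Fin n → Bool) :
    cnt s(a, b) S = if S a = true ∧ S b = true then 1 else 0 := by
  classical
  unfold cnt
  congr 1
  simp [Sym2.mem_iff]

lemma cnt_bflip_of_not_mem {n : ℕ} (a : Fin n) (e : Sym2 (Fin n)) (S : Fin n → Bool)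
    (h : a ∉ e) : cnt e (bflip a S) = cnt e S := by
  classical
  unfold cnt
  congr 1
  apply propext
  have key : ∀ v ∈ e, bflip a S v = S v := by
    intro v hv
    exact bflip_apply_ne a v S (fun hva => h (hva ▸ hv))
  constructor <;> intro hh v hv
  · rw [← key v hv]; exact hh v hv
  · rw [key v hv]; exact hh v hv


open scoped symmDiff

lemma sum_zmod_two {α : Type*} [DecidableEq α] (s t : Finset α) (f : α → ZMod 2) :
    ∑ e ∈ s, f e + ∑ e ∈ t, f e = ∑ e ∈ s ∆ t, f e := by
  have hx : (∑ x ∈ s ∩ t, f x) + (∑ x ∈ s ∩ t, f x) = 0 := CharTwo.add_self_eq_zero _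
  rw [symmDiff_def, Finset.sup_eq_union, Finset.sum_union disjoint_sdiff_sdiff,
    ← Finset.sum_inter_add_sum_sdiff s t f, ← Finset.sum_inter_add_sum_sdiff t s f,
    Finset.inter_comm t s]
  linear_combination hx

lemma neg_one_pow_odd_sum (a b : ℕ) (h : ((a + b : ℕ) : ZMod 2) = 1) :
    (-1 : ℂ) ^ a = -(-1 : ℂ) ^ b := by
  have hodd : Odd (a + b) := ZMod.natCast_eq_one_iff_odd.mp h
  rcases Nat.even_or_odd a with ha | ha <;> rcases Nat.even_or_odd b with hb | hb
  · exact absurd hodd (Nat.not_odd_iff_even.mpr (ha.add hb))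
  · simp [ha.neg_one_pow, hb.neg_one_pow]
  · simp [ha.neg_one_pow, hb.neg_one_pow]
  · exact absurd hodd (Nat.not_odd_iff_even.mpr (ha.add_odd hb))

lemma four_bound (t1 t2 t3 t4 : ℕ) (h : ((t1 + t2 + t3 + t4 : ℕ) : ZMod 2) = 1) :
    ‖(-1 : ℂ) ^ t1 + (-1) ^ t2 + (-1) ^ t3 + (-1) ^ t4‖ ≤ 2 := by
  have hodd : (t1 + t2 + t3 + t4) % 2 = 1 := Nat.odd_iff.mp (ZMod.natCast_eq_one_iff_odd.mp h)
  rcases Nat.even_or_odd t1 with h1 | h1 <;> rcases Nat.even_or_odd t2 with h2 | h2 <;>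
    rcases Nat.even_or_odd t3 with h3 | h3 <;> rcases Nat.even_or_odd t4 with h4 | h4 <;>
    first
      | (exfalso; simp only [Nat.even_iff, Nat.odd_iff] at h1 h2 h3 h4; omega)
      | (rw [h1.neg_one_pow, h2.neg_one_pow, h3.neg_one_pow, h4.neg_one_pow]; norm_num)

lemma g4_parity {n : ℕ} (u v : Fin n) (huv : u ≠ v) (S : Fin n → Bool) (e : Sym2 (Fin n)) :
    ((cnt e S + cnt e (bflip u S) + cnt e (bflip v S) + cnt e (bflip u (bflip v S)) : ℕ) :
      ZMod 2) = if e = s(u, v) then 1 else 0 := by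
  classical
  induction e using Sym2.inductionOn with
  | hf a b =>
  by_cases hu : u ∈ s(a, b)
  · by_cases hv : v ∈ s(a, b)
    · -- e = s(u,v)
      have he : s(a, b) = s(u, v) := by
        rw [Sym2.mem_iff] at hu hv
        rcases hu with rfl | rfl <;> rcases hv with rfl | rfl
        · exact absurd rfl huv
        · rfl
        · exact Sym2.eq_swap
        · exact absurd rfl huv.symm
      rw [he, if_pos rfl]
      have k1 : bflip u S v = S v := bflip_apply_ne u v S huv.symm
      have k2 : bflip v S u = S u := bflip_apply_ne v u S huv
      have k3 : bflip u (bflip v S) u = !S u := by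
        rw [bflip_apply_self, bflip_apply_ne v u S huv]
      have k4 : bflip u (bflip v S) v = !S v := by
        rw [bflip_apply_ne u v _ huv.symm, bflip_apply_self]
      rw [cnt_mk, cnt_mk, cnt_mk, cnt_mk, bflip_apply_self, k1, k2, bflip_apply_self, k3, k4]
      cases hSu : S u <;> cases hSv : S v <;> norm_num
    · -- v ∉ e
      have c1 : cnt s(a, b) (bflip v S) = cnt s(a, b) S := cnt_bflip_of_not_mem v _ S hv
      have c2 : cnt s(a, b) (bflip u (bflip v S)) = cnt s(a, b) (bflip u S) := by
        rw [bflip_comm u v huv]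
        exact cnt_bflip_of_not_mem v _ _ hv
      have hne : s(a, b) ≠ s(u, v) := fun h => hv (h ▸ Sym2.mem_mk_right u v)
      rw [if_neg hne, c1, c2]
      push_cast
      ring_nf
      rw [show (2 : ZMod 2) = 0 from rfl]
      ring
  · -- u ∉ e
    have c1 : cnt s(a, b) (bflip u S) = cnt s(a, b) S := cnt_bflip_of_not_mem u _ S hu
    have c2 : cnt s(a, b) (bflip u (bflip v S)) = cnt s(a, b) (bflip v S) :=
      cnt_bflip_of_not_mem u _ _ hu
    have hne : s(a, b) ≠ s(u, v) := fun h => hu (h ▸ Sym2.mem_mk_left u v)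
    rw [if_neg hne, c1, c2]
    push_cast
    ring_nf
    rw [show (2 : ZMod 2) = 0 from rfl]
    ring

lemma g2_parity {n : ℕ} (v : Fin n) (S : Fin n → Bool) (e : Sym2 (Fin n)) (hd : e.IsDiag) :
    ((cnt e S + cnt e (bflip v S) : ℕ) : ZMod 2) = if e = s(v, v) then 1 else 0 := by
  classical
  induction e using Sym2.inductionOn with
  | hf a b =>
  have hab : a = b := Sym2.mk_isDiag_iff.mp hd
  subst hab
  by_cases hav : a = v
  · subst hav
    rw [if_pos rfl, cnt_mk, cnt_mk, bflip_apply_self]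
    cases hS : S a <;> norm_num
  · have hnm : v ∉ s(a, a) := by simp [Sym2.mem_iff, Ne.symm hav]
    have c1 : cnt s(a, a) (bflip v S) = cnt s(a, a) S := cnt_bflip_of_not_mem v _ S hnm
    have hne : s(a, a) ≠ s(v, v) := by simp [Sym2.eq_iff, hav]
    rw [if_neg hne, c1]
    push_cast
    exact CharTwo.add_self_eq_zero _

lemma hE_expand {n : ℕ} (G : Finset (Sym2 (Fin n))) (S1 S2 S3 S4 : Fin n → Bool) :
    ((edgeCount G S1 + edgeCount G S2 + edgeCount G S3 + edgeCount G S4 : ℕ) : ZMod 2) =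
      ∑ e ∈ G, ((cnt e S1 + cnt e S2 + cnt e S3 + cnt e S4 : ℕ) : ZMod 2) := by
  simp only [edgeCount_eq_sum, ← Finset.sum_add_distrib, Nat.cast_sum]

lemma hE_expand2 {n : ℕ} (G : Finset (Sym2 (Fin n))) (S1 S2 : Fin n → Bool) :
    ((edgeCount G S1 + edgeCount G S2 : ℕ) : ZMod 2) =
      ∑ e ∈ G, ((cnt e S1 + cnt e S2 : ℕ) : ZMod 2) := by
  simp only [edgeCount_eq_sum, ← Finset.sum_add_distrib, Nat.cast_sum]

lemma caseA {n : ℕ} (E E' : Finset (Sym2 (Fin n))) (u v : Fin n) (huv : u ≠ v)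
    (hm : s(u, v) ∈ E ∆ E') :
    ‖∑ S : Fin n → Bool, (-1 : ℂ) ^ (edgeCount E S + edgeCount E' S)‖ ≤
      2 ^ n / 2 := by
  classical
  set T : (Fin n → Bool) → ℕ := fun S => edgeCount E S + edgeCount E' S with hT
  set f : (Fin n → Bool) → ℂ := fun S => (-1 : ℂ) ^ T S with hf
  have hparity : ∀ S : Fin n → Bool,
      ((T S + T (bflip u S) + T (bflip v S) + T (bflip u (bflip v S)) : ℕ) : ZMod 2) = 1 := by
    intro S
    have step1 : ((T S + T (bflip u S) + T (bflip v S) + T (bflip u (bflip v S)) : ℕ) : ZMod 2)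
        = ((edgeCount E S + edgeCount E (bflip u S) + edgeCount E (bflip v S) +
            edgeCount E (bflip u (bflip v S)) : ℕ) : ZMod 2)
          + ((edgeCount E' S + edgeCount E' (bflip u S) + edgeCount E' (bflip v S) +
            edgeCount E' (bflip u (bflip v S)) : ℕ) : ZMod 2) := by
      rw [hT]; push_cast; ring
    rw [step1, hE_expand, hE_expand]
    have congrE : ∀ (G : Finset (Sym2 (Fin n))),
        ∑ e ∈ G, ((cnt e S + cnt e (bflip u S) + cnt e (bflip v S) +
          cnt e (bflip u (bflip v S)) : ℕ) : ZMod 2)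
        = ∑ e ∈ G, (if e = s(u, v) then (1 : ZMod 2) else 0) := by
      intro G
      exact Finset.sum_congr rfl fun e _ => g4_parity u v huv S e
    rw [congrE E, congrE E', Finset.sum_ite_eq' E, Finset.sum_ite_eq' E']
    rcases Finset.mem_symmDiff.mp hm with ⟨h1, h2⟩ | ⟨h1, h2⟩ <;> simp [h1, h2]
  have hsum4 : ∑ S : Fin n → Bool,
      (f S + f (bflip u S) + f (bflip v S) + f (bflip u (bflip v S)))
      = 4 * ∑ S : Fin n → Bool, f S := by
    rw [Finset.sum_add_distrib, Finset.sum_add_distrib, Finset.sum_add_distrib]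
    rw [Function.Bijective.sum_comp (bflip_bijective u) f,
      Function.Bijective.sum_comp (bflip_bijective v) f,
      Function.Bijective.sum_comp (bflip_bijective v) (fun S' => f (bflip u S')),
      Function.Bijective.sum_comp (bflip_bijective u) f]
    ring
  have habs : (4 : ℝ) * ‖∑ S : Fin n → Bool, f S‖ ≤ 2 ^ n * 2 := by
    have h1 : ‖4 * ∑ S : Fin n → Bool, f S‖
        = 4 * ‖∑ S : Fin n → Bool, f S‖ := by
      rw [norm_mul]
      norm_num
    rw [← h1, ← hsum4]
    refine le_trans (norm_sum_le _ _) ?_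
    have hpt : ∀ S : Fin n → Bool,
        ‖f S + f (bflip u S) + f (bflip v S) + f (bflip u (bflip v S))‖ ≤ 2 :=
      fun S => four_bound _ _ _ _ (hparity S)
    calc ∑ S : Fin n → Bool,
        ‖f S + f (bflip u S) + f (bflip v S) + f (bflip u (bflip v S))‖
        ≤ ∑ _S : Fin n → Bool, (2 : ℝ) := Finset.sum_le_sum fun S _ => hpt S
      _ = 2 ^ n * 2 := by
          rw [Finset.sum_const, Finset.card_univ]
          simp [Fintype.card_fun]
  linarith [habs]

lemma caseB {n : ℕ} (E E' : Finset (Sym2 (Fin n))) (v : Fin n)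
    (hm : s(v, v) ∈ E ∆ E') (hdiag : ∀ e ∈ E ∆ E', e.IsDiag) :
    (∑ S : Fin n → Bool, (-1 : ℂ) ^ (edgeCount E S + edgeCount E' S)) = 0 := by
  classical
  set T : (Fin n → Bool) → ℕ := fun S => edgeCount E S + edgeCount E' S with hT
  set f : (Fin n → Bool) → ℂ := fun S => (-1 : ℂ) ^ T S with hf
  have hparity : ∀ S : Fin n → Bool, ((T (bflip v S) + T S : ℕ) : ZMod 2) = 1 := by
    intro S
    have step1 : ((T (bflip v S) + T S : ℕ) : ZMod 2)
        = ((edgeCount E S + edgeCount E (bflip v S) : ℕ) : ZMod 2)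
          + ((edgeCount E' S + edgeCount E' (bflip v S) : ℕ) : ZMod 2) := by
      rw [hT]; push_cast; ring
    rw [step1, hE_expand2, hE_expand2, sum_zmod_two]
    have : ∑ e ∈ E ∆ E', ((cnt e S + cnt e (bflip v S) : ℕ) : ZMod 2)
        = ∑ e ∈ E ∆ E', (if e = s(v, v) then (1 : ZMod 2) else 0) :=
      Finset.sum_congr rfl fun e he => g2_parity v S e (hdiag e he)
    rw [this, Finset.sum_ite_eq' (E ∆ E'), if_pos hm]
  have hneg : ∀ S, f (bflip v S) = -f S := fun S => neg_one_pow_odd_sum _ _ (hparity S)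
  have h1 : ∑ S : Fin n → Bool, f S = -∑ S : Fin n → Bool, f S := by
    conv_lhs => rw [← Function.Bijective.sum_comp (bflip_bijective v) f]
    simp only [hneg, Finset.sum_neg_distrib]
  have h2 : (2 : ℂ) * ∑ S : Fin n → Bool, f S = 0 := by linear_combination h1
  have := mul_eq_zero.mp h2
  simpa using this

lemma key_bound {n : ℕ} (E E' : Finset (Sym2 (Fin n))) (hne : E ≠ E') :
    ‖∑ S : Fin n → Bool, (-1 : ℂ) ^ (edgeCount E S + edgeCount E' S)‖ ≤
      2 ^ n / Real.sqrt 2 := by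
  classical
  have hsqrt2_pos : (0 : ℝ) < Real.sqrt 2 := Real.sqrt_pos.mpr (by norm_num)
  have hsqrt2_le : Real.sqrt 2 ≤ 2 := by
    nlinarith [Real.sq_sqrt (by norm_num : (0 : ℝ) ≤ 2), Real.sqrt_nonneg 2]
  by_cases hdiag : ∀ e ∈ E ∆ E', Sym2.IsDiag e
  · obtain ⟨e₀, he₀⟩ := Finset.symmDiff_nonempty.mpr hne
    have hd := hdiag e₀ he₀
    revert he₀ hd
    induction e₀ using Sym2.inductionOn with
    | hf a b =>
    intro he₀ hd
    have hab : a = b := Sym2.mk_isDiag_iff.mp hd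
    subst hab
    rw [caseB E E' a he₀ hdiag]
    simp
    positivity
  · push_neg at hdiag
    obtain ⟨e₁, he₁, hnd⟩ := hdiag
    revert he₁ hnd
    induction e₁ using Sym2.inductionOn with
    | hf u v =>
    intro he₁ hnd
    have huv : u ≠ v := fun h => hnd (Sym2.mk_isDiag_iff.mpr h)
    refine le_trans (caseA E E' u v huv he₁) ?_
    apply div_le_div_of_nonneg_left ?_ hsqrt2_pos hsqrt2_le
    positivity

/-- Distinct graphs have graph states with overlap at most `1/√2`; in particular the
graph states of distinct graphs are distinct. -/
theorem stmt5 {n : ℕ} (E E' : Finset (Sym2 (Fin n))) (hne : E ≠ E') :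
    ‖qInner (graphState E) (graphState E')‖ ≤ (Real.sqrt 2)⁻¹ ∧
    ‖∑ S : Fin n → Bool, (-1 : ℂ) ^ (edgeCount E S + edgeCount E' S)‖ ≤
      2 ^ n / Real.sqrt 2 ∧
    graphState E ≠ graphState E' := by
  classical
  have hs2 : (0 : ℝ) < Real.sqrt 2 := Real.sqrt_pos.mpr (by norm_num)
  have part2 := key_bound E E' hne
  have hq : qInner (graphState E) (graphState E')
      = ((((2 : ℝ)⁻¹ ^ n : ℝ)) : ℂ) *
        ∑ S : Fin n → Bool, (-1 : ℂ) ^ (edgeCount E S + edgeCount E' S) := by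
    rw [qInner, Finset.mul_sum]
    refine Finset.sum_congr rfl fun S _ => ?_
    rw [graphState, graphState, map_mul, map_pow, Complex.conj_ofReal, map_neg, map_one]
    have hrr : ((((Real.sqrt 2)⁻¹ ^ n : ℝ)) : ℂ) * ((((Real.sqrt 2)⁻¹ ^ n : ℝ)) : ℂ)
        = (((2 : ℝ)⁻¹ ^ n : ℝ) : ℂ) := by
      rw [← Complex.ofReal_mul]
      congr 1
      rw [← mul_pow, ← mul_inv, Real.mul_self_sqrt (by norm_num)]
    rw [pow_add]
    linear_combination ((-1 : ℂ) ^ edgeCount E S * (-1 : ℂ) ^ edgeCount E' S) * hrr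
  have habsc : ‖((((2 : ℝ)⁻¹ ^ n : ℝ)) : ℂ)‖ = (2 : ℝ)⁻¹ ^ n := by
    rw [Complex.norm_real, Real.norm_eq_abs, abs_of_nonneg (by positivity)]
  have part1 : ‖qInner (graphState E) (graphState E')‖ ≤ (Real.sqrt 2)⁻¹ := by
    rw [hq, norm_mul, habsc]
    calc (2 : ℝ)⁻¹ ^ n *
          ‖∑ S : Fin n → Bool, (-1 : ℂ) ^ (edgeCount E S + edgeCount E' S)‖
        ≤ (2 : ℝ)⁻¹ ^ n * ((2 : ℝ) ^ n / Real.sqrt 2) :=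
          mul_le_mul_of_nonneg_left part2 (by positivity)
      _ = (Real.sqrt 2)⁻¹ := by
          rw [div_eq_mul_inv, ← mul_assoc, ← mul_pow]
          norm_num
  refine ⟨part1, part2, ?_⟩
  intro heq
  have hKc : (((Real.sqrt 2)⁻¹ ^ n : ℝ) : ℂ) ≠ 0 := by
    rw [Complex.ofReal_ne_zero]
    positivity
  have hsign : ∀ S : Fin n → Bool, (-1 : ℂ) ^ edgeCount E S = (-1 : ℂ) ^ edgeCount E' S := by
    intro S
    have h := congrFun heq S
    rw [graphState, graphState] at h
    exact mul_right_cancel₀ hKc h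
  have hone : ∀ S : Fin n → Bool, (-1 : ℂ) ^ (edgeCount E S + edgeCount E' S) = 1 := by
    intro S
    rw [pow_add, hsign S, ← pow_add]
    exact Even.neg_one_pow ⟨edgeCount E' S, rfl⟩
  have hZval : (∑ S : Fin n → Bool, (-1 : ℂ) ^ (edgeCount E S + edgeCount E' S))
      = (2 : ℂ) ^ n := by
    rw [Finset.sum_congr rfl fun S _ => hone S, Finset.sum_const, Finset.card_univ]
    simp [Fintype.card_fun]
  rw [hZval] at part2
  have habs2 : ‖(2 : ℂ) ^ n‖ = (2 : ℝ) ^ n := by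
    rw [norm_pow]
    norm_num
  rw [habs2] at part2
  have hlt : (2 : ℝ) ^ n / Real.sqrt 2 < 2 ^ n := by
    apply div_lt_self (by positivity)
    nlinarith [Real.sq_sqrt (by norm_num : (0 : ℝ) ≤ 2), Real.sqrt_nonneg 2]
  linarith
end

section
/- For every edge set E on Fin n and every vertex a, applying the Pauli Z gate on qubit a performs loop-complementation at a: Z_a |G_E⟩ = |G_{E'}⟩, where E' is the symmetric difference of E with the single self-loop {s(a,a)}. -/
open Finset

/-- Pauli `Z` on qubit `a` performs loop-complementation at `a`. -/
theorem stmt7 {n : ℕ} (E : Finset (Sym2 (Fin n))) (a : Fin n) :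
    Zgate a (graphState E) = graphState (symmDiff E {s(a, a)}) := by
  classical
  funext S
  simp only [Zgate, graphState, ← mul_assoc]
  congr 1
  have hP : (∀ v ∈ s(a,a), S v = true) ↔ S a = true := by
    constructor
    · intro h; exact h a (Sym2.mem_mk_left a a)
    · intro h v hv
      rcases Sym2.mem_iff.mp hv with rfl | rfl <;> exact h
  unfold edgeCount
  have hfilt : (symmDiff E {s(a,a)}).filter (fun e => ∀ v ∈ e, S v = true)
      = symmDiff (E.filter (fun e => ∀ v ∈ e, S v = true))
          (({s(a,a)} : Finset (Sym2 (Fin n))).filter (fun e => ∀ v ∈ e, S v = true)) := by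
    ext e
    simp only [Finset.mem_filter, Finset.mem_symmDiff]
    by_cases hq : ∀ v ∈ e, S v = true
    · have h' : ¬ ∃ x ∈ e, S x = false := by
        rintro ⟨x, hx, hfx⟩; rw [hq x hx] at hfx; simp at hfx
      simp [hq, h']
      tauto
    · simp [hq]
  rw [hfilt]
  by_cases hS : S a = true
  · have h1 : (({s(a,a)} : Finset (Sym2 (Fin n))).filter (fun e => ∀ v ∈ e, S v = true))
        = {s(a,a)} := by
      rw [Finset.filter_eq_self]; intro e he; simp at he; subst he; exact hP.mpr hS
    rw [h1, hS, if_pos rfl]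
    set F := E.filter (fun e => ∀ v ∈ e, S v = true) with hF
    by_cases hmem : s(a,a) ∈ F
    · have : symmDiff F {s(a,a)} = F.erase s(a,a) := by
        ext e
        simp [Finset.mem_symmDiff, Finset.mem_erase]
        constructor
        · rintro (⟨h1,h2⟩|⟨rfl,h2⟩); exact ⟨h2, h1⟩; exact absurd hmem h2
        · rintro ⟨h1,h2⟩; exact Or.inl ⟨h2,h1⟩
      rw [this, Finset.card_erase_of_mem hmem]
      have hpos : 0 < F.card := Finset.card_pos.mpr ⟨_, hmem⟩
      have hc : (-1:ℂ) ^ F.card = -1 * (-1) ^ (F.card - 1) := by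
        conv_lhs => rw [show F.card = (F.card - 1) + 1 from (Nat.succ_pred_eq_of_pos hpos).symm]
        rw [pow_succ]; ring
      rw [hc]; ring
    · have : symmDiff F {s(a,a)} = insert s(a,a) F := by
        ext e
        simp [Finset.mem_symmDiff, Finset.mem_insert]
        constructor
        · rintro (⟨h1,h2⟩|⟨rfl,h2⟩); exact Or.inr h1; exact Or.inl rfl
        · rintro (rfl|h1); exact Or.inr ⟨rfl, hmem⟩; exact Or.inl ⟨h1, by rintro rfl; exact hmem h1⟩
      rw [this, Finset.card_insert_of_notMem hmem]
      ring
  · have h1 : (({s(a,a)} : Finset (Sym2 (Fin n))).filter (fun e => ∀ v ∈ e, S v = true))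
        = ∅ := by
      rw [Finset.filter_eq_empty_iff]; intro e he; simp at he; subst he
      intro h; exact hS (hP.mp h)
    rw [h1, show (∅ : Finset (Sym2 (Fin n))) = ⊥ from rfl, symmDiff_bot,
      if_neg hS, one_mul]
end

section
/- For every edge set E on Fin n and every vertex a, applying the Pauli X gate on qubit a performs loop-complementation on the neighbourhood of a: X_a |G_E⟩ = (−1)^{[s(a,a) ∈ E]} · |G_{E'}⟩, where E' is the symmetric difference of E with the set of self-loops {s(v,v) : v ∈ N(a) \ {a}}. -/
open Finset

open scoped Classical

lemma zsum_symmDiff {α} [DecidableEq α] (s t : Finset α) (f : α → ZMod 2) :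
    ∑ x ∈ symmDiff s t, f x = ∑ x ∈ s, f x + ∑ x ∈ t, f x := by
  rw [symmDiff_def, Finset.sup_eq_union, Finset.sum_union disjoint_sdiff_sdiff]
  have h1 := Finset.sum_inter_add_sum_sdiff s t f
  have h2 := Finset.sum_inter_add_sum_sdiff t s f
  rw [Finset.inter_comm] at h2
  rw [← h1, ← h2, ← sub_eq_zero]
  ring_nf
  rw [show (2:ZMod 2) = 0 from rfl]
  ring

lemma neg_one_pow_congr' (m k : ℕ) (h : (m : ZMod 2) = (k : ZMod 2)) :
    (-1:ℂ)^m = (-1:ℂ)^k := by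
  have hmk : m % 2 = k % 2 := (ZMod.natCast_eq_natCast_iff m k 2).mp h
  rcases Nat.even_or_odd m with hm | hm
  · have hk : Even k := Nat.even_iff.mpr (by rw [← hmk]; exact Nat.even_iff.mp hm)
    rw [hm.neg_one_pow, hk.neg_one_pow]
  · have hk : Odd k := Nat.odd_iff.mpr (by rw [← hmk]; exact Nat.odd_iff.mp hm)
    rw [hm.neg_one_pow, hk.neg_one_pow]

lemma cast_edgeCount {n : ℕ} (E : Finset (Sym2 (Fin n))) (S : Fin n → Bool) :
    ((edgeCount E S : ZMod 2)) = ∑ e ∈ E, (if (∀ v ∈ e, S v = true) then (1:ZMod 2) else 0) := by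
  rw [edgeCount]
  exact (Finset.sum_boole ..).symm

lemma forall_mem_sym2 {n : ℕ} (T : Fin n → Bool) (u v : Fin n) :
    (∀ w ∈ s(u,v), T w = true) ↔ (T u = true ∧ T v = true) := by
  simp [Sym2.mem_iff]


/-- Pauli `X` on qubit `a` performs loop-complementation on `N(a) \ {a}`, up to the
sign `(-1)^{[s(a,a) ∈ E]}`. -/
theorem stmt8 {n : ℕ} (E : Finset (Sym2 (Fin n))) (a : Fin n) :
    Xgate a (graphState E) = fun S =>
      (if s(a, a) ∈ E then (-1 : ℂ) else 1) *
        graphState (symmDiff E (((nbhd E a).erase a).image fun v => s(v, v))) S := by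
  classical
  funext S
  set L : Finset (Sym2 (Fin n)) := ((nbhd E a).erase a).image fun v => s(v, v) with hLdef
  set S' := Function.update S a (!S a) with hS'
  set c : Sym2 (Fin n) → (Fin n → Bool) → ZMod 2 :=
    fun e T => if (∀ v ∈ e, T v = true) then 1 else 0 with hc
  have hS'a : S' a = !S a := Function.update_self a (!S a) S
  have hS'ne : ∀ u, u ≠ a → S' u = S u := fun u hu => Function.update_of_ne hu _ S
  -- key parity identity
  have key : ((edgeCount E S' : ZMod 2))
      = (((if s(a,a) ∈ E then 1 else 0 : ℕ) : ZMod 2))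
        + (edgeCount (symmDiff E L) S : ZMod 2) := by
    rw [cast_edgeCount, cast_edgeCount, zsum_symmDiff]
    -- ∑_E c e S' = ∑_E c e S + ∑_E d e
    have hsplit : ∑ e ∈ E, c e S' = ∑ e ∈ E, c e S + ∑ e ∈ E, (c e S' + c e S) := by
      rw [← Finset.sum_add_distrib]
      refine Finset.sum_congr rfl fun e _ => ?_
      have : c e S + (c e S' + c e S) = c e S' + (c e S + c e S) := by ring
      rw [this, CharTwo.add_self_eq_zero, add_zero]
    have hd0 : ∀ e ∈ E, (c e S' + c e S) ≠ 0 → a ∈ e := by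
      intro e _ hne
      by_contra ha
      have : c e S' = c e S := by
        simp only [hc]
        refine if_congr ?_ rfl rfl
        constructor <;> intro h w hw
        · rw [← hS'ne w (fun hw' => ha (hw' ▸ hw))]; exact h w hw
        · rw [hS'ne w (fun hw' => ha (hw' ▸ hw))]; exact h w hw
      rw [this, CharTwo.add_self_eq_zero] at hne
      exact hne rfl
    have hfilter : E.filter (fun e => a ∈ e) = (nbhd E a).image (fun u => s(a,u)) := by
      ext e
      simp only [Finset.mem_filter, Finset.mem_image, nbhd, Finset.mem_univ, true_and]
      constructor
      · rintro ⟨he, ha⟩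
        induction e using Sym2.ind with
        | _ u v =>
          rcases Sym2.mem_iff.mp ha with rfl | rfl
          · exact ⟨v, by rwa [Sym2.eq_swap], rfl⟩
          · exact ⟨u, he, Sym2.eq_swap⟩
      · rintro ⟨u, hu, rfl⟩
        exact ⟨by rwa [Sym2.eq_swap] at hu, Sym2.mem_mk_left a u⟩
    have hsum_d : ∑ e ∈ E, (c e S' + c e S)
        = ∑ u ∈ nbhd E a, (c s(a,u) S' + c s(a,u) S) := by
      rw [← Finset.sum_filter_of_ne hd0, hfilter, Finset.sum_image]
      intro u _ v _ h
      exact Sym2.congr_right.mp h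
    -- value of d on loop edge
    have hdaa : c s(a,a) S' + c s(a,a) S = 1 := by
      simp only [hc, forall_mem_sym2, hS'a]
      cases h : S a <;> simp [h]
    have hdau : ∀ u, u ≠ a → c s(a,u) S' + c s(a,u) S = c s(u,u) S := by
      intro u hu
      simp only [hc, forall_mem_sym2, hS'a, hS'ne u hu]
      cases h : S a <;> cases h' : S u <;> simp [h, h']
    have hLsum : ∑ e ∈ L, c e S = ∑ u ∈ (nbhd E a).erase a, c s(u,u) S := by
      rw [hLdef, Finset.sum_image]
      intro u _ v _ h
      rw [Sym2.eq_iff] at h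
      tauto
    rw [hsplit, hsum_d, hLsum]
    by_cases haa : s(a,a) ∈ E
    · have hmem : a ∈ nbhd E a := by simp [nbhd, haa]
      rw [← Finset.sum_erase_add (nbhd E a) _ hmem, hdaa]
      rw [Finset.sum_congr rfl (fun u hu => hdau u (Finset.ne_of_mem_erase hu))]
      simp [haa, hc]
      ring
    · have hmem : a ∉ nbhd E a := by simp [nbhd, haa]
      rw [Finset.erase_eq_of_notMem hmem]
      rw [Finset.sum_congr rfl (fun u hu => hdau u ?_)]
      · simp [haa, hc]
      · rintro rfl; exact hmem hu
  -- conclude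
  simp only [Xgate, graphState]
  have hpow := neg_one_pow_congr' (edgeCount E S')
      ((if s(a,a) ∈ E then 1 else 0) + edgeCount (symmDiff E L) S)
      (by push_cast; rw [key]; push_cast; ring)
  rw [hpow, pow_add, mul_assoc]
  congr 1
  split_ifs <;> simp
end

section
/- For every edge set E on Fin n and distinct vertices a ≠ b, the CNOT gate controlled on a and targeted on b satisfies CNOT_{a,b} |G_E⟩ = |G_{E'}⟩, where E' is obtained from E by taking the symmetric difference with the edges {s(a,v) : v ∈ N(b) \ {b}} and additionally, when b has a self-loop (s(b,b) ∈ E), with the self-loop {s(a,a)}; i.e., CNOT complements the edges between a and the neighbourhood of b (other than b itself), and loop-complements a when b carries a self-loop. -/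
open Finset

/-- `CNOT` controlled on `a` targeted on `b`:
`(CNOT_{a,b} ψ) S = ψ S'` where `S'` is `S` with bit `b` replaced by `S b XOR S a`. -/
noncomputable def CNOTgate {n : ℕ} (a b : Fin n) : QState n → QState n :=
  fun ψ S => ψ (Function.update S b (xor (S b) (S a)))

open scoped Classical


noncomputable def chi {n : ℕ} (S : Fin n → Bool) (e : Sym2 (Fin n)) : ℂ :=
  if ∀ v ∈ e, S v = true then -1 else 1

lemma chi_mk {n} (S : Fin n → Bool) (u w : Fin n) :
    chi S s(u, w) = if S u && S w then -1 else 1 := by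
  unfold chi
  simp [Sym2.mem_iff, Bool.and_eq_true]

lemma chi_sq {n} (S : Fin n → Bool) (e : Sym2 (Fin n)) : chi S e * chi S e = 1 := by
  unfold chi; split_ifs <;> norm_num


lemma filter_eq_image {n} (E : Finset (Sym2 (Fin n))) (b : Fin n) :
    E.filter (fun e => b ∈ e ∧ e ≠ s(b,b)) =
      ((nbhd E b).erase b).image (fun u => s(u, b)) := by
  ext e
  induction e using Sym2.ind with
  | _ u w =>
    simp only [Finset.mem_filter, Finset.mem_image, Finset.mem_erase, nbhd,
      Finset.mem_filter, Finset.mem_univ, true_and, Sym2.mem_iff]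
    constructor
    · rintro ⟨hE, hb, hne⟩
      rcases hb with rfl | rfl
      · refine ⟨w, ⟨?_, ?_⟩, Sym2.eq_swap⟩
        · rintro rfl; exact hne rfl
        · rwa [Sym2.eq_swap]
      · exact ⟨u, ⟨fun h => hne (by rw [h]), hE⟩, rfl⟩
    · rintro ⟨x, ⟨hxb, hxE⟩, hx⟩
      rw [Sym2.eq_iff] at hx
      rcases hx with ⟨rfl, rfl⟩ | ⟨rfl, rfl⟩
      · refine ⟨hxE, Or.inr rfl, ?_⟩
        intro h
        rw [Sym2.eq_iff] at h
        rcases h with ⟨rfl, _⟩ | ⟨rfl, _⟩ <;> exact hxb rfl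
      · refine ⟨by rwa [Sym2.eq_swap] at hxE, Or.inl rfl, ?_⟩
        intro h
        rw [Sym2.eq_iff] at h
        rcases h with ⟨_, rfl⟩ | ⟨_, rfl⟩ <;> exact hxb rfl

lemma ratio_prod {n} (E : Finset (Sym2 (Fin n))) (a b : Fin n)
    (S : Fin n → Bool) :
    (∏ e ∈ E, chi (Function.update S b (xor (S b) (S a))) e) =
      (∏ e ∈ E, chi S e) *
        ((∏ v ∈ (nbhd E b).erase b, chi S s(a, v)) *
          (if s(b, b) ∈ E then chi S s(a, a) else 1)) := by
  set S' := Function.update S b (xor (S b) (S a)) with hS'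
  have hSb : S' b = xor (S b) (S a) := Function.update_self _ _ _
  have hSo : ∀ u, u ≠ b → S' u = S u := fun u hu => Function.update_of_ne hu _ _
  set r : Sym2 (Fin n) → ℂ := fun e => chi S e * chi S' e with hr
  have key : ∀ e, chi S' e = chi S e * r e := by
    intro e
    rw [hr]
    have := chi_sq S e
    dsimp only
    rw [← mul_assoc, this, one_mul]
  calc ∏ e ∈ E, chi S' e = ∏ e ∈ E, (chi S e * r e) := by
        exact Finset.prod_congr rfl fun e _ => key e
    _ = (∏ e ∈ E, chi S e) * ∏ e ∈ E, r e := Finset.prod_mul_distrib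
    _ = _ := by
        congr 1
        -- split off edges not containing b
        rw [← Finset.prod_filter_mul_prod_filter_not E (fun e => b ∈ e)]
        have hnot : ∏ e ∈ E.filter (fun e => ¬ b ∈ e), r e = 1 := by
          refine Finset.prod_eq_one fun e he => ?_
          rw [Finset.mem_filter] at he
          have : chi S' e = chi S e := by
            unfold chi
            congr 1
            refine propext ⟨fun h v hv => ?_, fun h v hv => ?_⟩
            · rw [← hSo v (fun hvb => he.2 (hvb ▸ hv))]; exact h v hv
            · rw [hSo v (fun hvb => he.2 (hvb ▸ hv))]; exact h v hv
          rw [hr]; dsimp only; rw [this, chi_sq]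
        rw [hnot, mul_one]
        -- split filter (b ∈ ·) into loop and non-loop
        rw [← Finset.prod_filter_mul_prod_filter_not (E.filter (fun e => b ∈ e))
          (fun e => e ≠ s(b,b))]
        have h1 : (E.filter (fun e => b ∈ e)).filter (fun e => e ≠ s(b,b)) =
            E.filter (fun e => b ∈ e ∧ e ≠ s(b,b)) := by
          rw [Finset.filter_filter]
        have h2 : (E.filter (fun e => b ∈ e)).filter (fun e => ¬ e ≠ s(b,b)) =
            if s(b,b) ∈ E then {s(b,b)} else ∅ := by
          ext e
          simp only [Finset.mem_filter, not_not]
          split_ifs with h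
          · simp only [Finset.mem_singleton]
            constructor
            · rintro ⟨_, rfl⟩; rfl
            · rintro rfl; exact ⟨⟨h, by simp⟩, rfl⟩
          · simp only [Finset.notMem_empty, iff_false]
            rintro ⟨⟨hE, _⟩, rfl⟩; exact h hE
        rw [h1, h2, filter_eq_image]
        congr 1
        · rw [Finset.prod_image]
          · refine Finset.prod_congr rfl fun u hu => ?_
            have hub : u ≠ b := (Finset.mem_erase.mp hu).1
            rw [hr]
            dsimp only
            rw [chi_mk, chi_mk, chi_mk, hSo u hub, hSb]
            cases hu1 : S u <;> cases hu2 : S b <;> cases hu3 : S a <;> simp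
          · intro x _ y _ h
            rw [Sym2.eq_iff] at h
            rcases h with ⟨h1, _⟩ | ⟨h1, h2⟩
            · exact h1
            · rw [h1, h2]
        · split_ifs with h
          · rw [Finset.prod_singleton, hr]
            dsimp only
            rw [chi_mk, chi_mk, chi_mk, hSb]
            cases hu2 : S b <;> cases hu3 : S a <;> simp
          · exact Finset.prod_empty
lemma prod_symmDiff' {α : Type*} [DecidableEq α] (s t : Finset α) (f : α → ℂ)
    (hf : ∀ x, f x * f x = 1) :
    ∏ x ∈ symmDiff s t, f x = (∏ x ∈ s, f x) * ∏ x ∈ t, f x := by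
  have hd : Disjoint (symmDiff s t) (s ∩ t) := by
    have := disjoint_symmDiff_inf s t
    rwa [Finset.inf_eq_inter] at this
  have h1 : (∏ x ∈ symmDiff s t, f x) * ∏ x ∈ s ∩ t, f x = ∏ x ∈ s ∪ t, f x := by
    rw [← Finset.prod_union hd]
    congr 1
    have := symmDiff_sup_inf s t
    rwa [Finset.inf_eq_inter, Finset.sup_eq_union] at this
  have h2 : (∏ x ∈ s ∪ t, f x) * ∏ x ∈ s ∩ t, f x = (∏ x ∈ s, f x) * ∏ x ∈ t, f x :=
    Finset.prod_union_inter
  have h3 : (∏ x ∈ s ∩ t, f x) * ∏ x ∈ s ∩ t, f x = 1 := by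
    rw [← Finset.prod_mul_distrib]
    exact Finset.prod_eq_one fun x _ => hf x
  calc ∏ x ∈ symmDiff s t, f x
      = (∏ x ∈ symmDiff s t, f x) * ((∏ x ∈ s ∩ t, f x) * ∏ x ∈ s ∩ t, f x) := by rw [h3, mul_one]
    _ = ((∏ x ∈ symmDiff s t, f x) * ∏ x ∈ s ∩ t, f x) * ∏ x ∈ s ∩ t, f x := by ring
    _ = _ := by rw [h1, h2]

lemma pow_edgeCount {n} (E : Finset (Sym2 (Fin n))) (S : Fin n → Bool) :
    (-1 : ℂ) ^ edgeCount E S = ∏ e ∈ E, chi S e := by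
  unfold edgeCount chi
  rw [Finset.prod_ite, Finset.prod_const, Finset.prod_const, one_pow, mul_one]

/-- `CNOT_{a,b}` complements the edges between `a` and `N(b) \ {b}`, and
loop-complements `a` when `b` has a self-loop. -/
theorem stmt10 {n : ℕ} (E : Finset (Sym2 (Fin n))) (a b : Fin n) (hab : a ≠ b) :
    CNOTgate a b (graphState E) =
      graphState
        (symmDiff (symmDiff E (((nbhd E b).erase b).image fun v => s(a, v)))
          (if s(b, b) ∈ E then {s(a, a)} else ∅)) := by
  funext S
  show graphState E (Function.update S b (xor (S b) (S a))) = _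
  unfold graphState
  congr 1
  rw [pow_edgeCount, pow_edgeCount, ratio_prod E a b S,
    prod_symmDiff' _ _ _ (chi_sq S), prod_symmDiff' _ _ _ (chi_sq S)]
  have hinj : ∀ x ∈ (nbhd E b).erase b, ∀ y ∈ (nbhd E b).erase b, s(a, x) = s(a, y) → x = y := by
    intro x _ y _ h
    rw [Sym2.eq_iff] at h
    rcases h with ⟨_, h2⟩ | ⟨h1, h2⟩
    · exact h2
    · rw [← h1, h2]
  have hif : (∏ x ∈ (if s(b, b) ∈ E then ({s(a, a)} : Finset (Sym2 (Fin n))) else ∅), chi S x)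
      = (if s(b, b) ∈ E then chi S s(a, a) else 1) := by
    split_ifs <;> simp
  rw [Finset.prod_image hinj, hif, mul_assoc]
end

section
/- Interset complementation: let E be an edge set on Fin n and let S₁, S₂ be disjoint subsets of Fin n. Work on n + 2 qubits with ancilla qubits a and b, and consider the operator W = (∏_{v ∈ S₁} CZ_{a,v}) (∏_{u ∈ S₂} CZ_{b,u}) ∘ FX_{a,b} ∘ (∏_{v ∈ S₁} CZ_{a,v}) (∏_{u ∈ S₂} CZ_{b,u}). Then W (|G_E⟩ ⊗ |+⟩_a ⊗ |+⟩_b) = |G_{E'}⟩ ⊗ |+⟩_a ⊗ |+⟩_b, where E' is the symmetric difference of E with {s(v,u) : v ∈ S₁, u ∈ S₂}; i.e., all edges between S₁ and S₂ are complemented, the ancillas are returned to |+⟩ unentangled, and the circuit uses O(|S₁| + |S₂|) two-qubit gates. -/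
open Finset

/-- The gate `FX_{a,b} = (H_a H_b) ∘ CZ_{a,b} ∘ (H_a H_b)`. -/
noncomputable def FXgate {n : ℕ} (a b : Fin n) : QState n → QState n :=
  fun ψ => Hgate a (Hgate b (CZgate a b (Hgate a (Hgate b ψ))))

/-- Any two `CZ` gates commute (as elements of `Function.End (QState n)`). -/
lemma CZgate_commute {n : ℕ} (a b c d : Fin n) :
    @Commute (Function.End (QState n)) _ (CZgate a b) (CZgate c d) := by
  unfold Commute SemiconjBy
  funext ψ S
  show CZgate a b (CZgate c d ψ) S = CZgate c d (CZgate a b ψ) S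
  simp only [CZgate]
  ring

/-- The product `∏_{v ∈ A} CZ_{a,v}` of controlled-`Z` gates from qubit `a` to every
qubit in `A`. -/
noncomputable def CZprod {n : ℕ} (a : Fin n) (A : Finset (Fin n)) :
    Function.End (QState n) :=
  A.noncommProd (fun v => (CZgate a v : Function.End (QState n)))
    (by intro u _ w _ _; exact CZgate_commute a u a w)

lemma end_mul_apply {α : Type*} (f g : Function.End α) (x : α) : (f * g) x = f (g x) := rfl

lemma CZprod_apply {m : ℕ} (a : Fin m) (A : Finset (Fin m)) (ψ : QState m) (S : Fin m → Bool) :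
    CZprod a A ψ S = (∏ v ∈ A, (if S a && S v then (-1:ℂ) else 1)) * ψ S := by
  classical
  induction A using Finset.induction_on with
  | empty => simp [CZprod]; rfl
  | @insert u A' h ih =>
    erw [CZprod, Finset.noncommProd_insert_of_notMem _ _ _ _ h, end_mul_apply]
    show (if S a && S u then (-1:ℂ) else 1) * (CZprod a A' ψ S) = _
    rw [ih, Finset.prod_insert h]; ring
noncomputable def msign (x : Bool) (k : ℕ) : ℂ := if x then (-1)^k else 1

lemma msign_key (x y : Bool) (k₁ k₂ : ℕ) :
    (2:ℂ)⁻¹ * (msign x k₁ * msign y k₂) *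
      (msign x k₁ * msign y k₂ + msign (!x) k₁ * msign y k₂ +
        msign x k₁ * msign (!y) k₂ - msign (!x) k₁ * msign (!y) k₂) = (-1)^(k₁*k₂) := by
  rcases Nat.even_or_odd k₁ with h1 | h1 <;> rcases Nat.even_or_odd k₂ with h2 | h2
  · have e1 : ((-1:ℂ))^k₁ = 1 := h1.neg_one_pow
    have e2 : ((-1:ℂ))^k₂ = 1 := h2.neg_one_pow
    have e3 : ((-1:ℂ))^(k₁*k₂) = 1 := (Nat.even_mul.mpr (Or.inl h1)).neg_one_pow
    cases x <;> cases y <;> simp [msign, e1, e2, e3] <;> norm_num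
  · have e1 : ((-1:ℂ))^k₁ = 1 := h1.neg_one_pow
    have e2 : ((-1:ℂ))^k₂ = -1 := h2.neg_one_pow
    have e3 : ((-1:ℂ))^(k₁*k₂) = 1 := (Nat.even_mul.mpr (Or.inl h1)).neg_one_pow
    cases x <;> cases y <;> simp [msign, e1, e2, e3] <;> norm_num
  · have e1 : ((-1:ℂ))^k₁ = -1 := h1.neg_one_pow
    have e2 : ((-1:ℂ))^k₂ = 1 := h2.neg_one_pow
    have e3 : ((-1:ℂ))^(k₁*k₂) = 1 := (Nat.even_mul.mpr (Or.inr h2)).neg_one_pow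
    cases x <;> cases y <;> simp [msign, e1, e2, e3] <;> norm_num
  · have e1 : ((-1:ℂ))^k₁ = -1 := h1.neg_one_pow
    have e2 : ((-1:ℂ))^k₂ = -1 := h2.neg_one_pow
    have e3 : ((-1:ℂ))^(k₁*k₂) = -1 := (Nat.odd_mul.mpr ⟨h1, h2⟩).neg_one_pow
    cases x <;> cases y <;> simp [msign, e1, e2, e3] <;> norm_num
lemma upd3 {α β : Type*} [DecidableEq α] (S : α → β) {a b : α} (hab : a ≠ b) (t₁ t₂ t₃ : β) :
    Function.update (Function.update (Function.update S a t₁) b t₂) a t₃ =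
      Function.update (Function.update S a t₃) b t₂ := by
  rw [Function.update_comm hab, Function.update_idem, Function.update_comm hab.symm]

lemma FX_apply {m : ℕ} (a b : Fin m) (hab : a ≠ b) (ψ : QState m) (S : Fin m → Bool) :
    FXgate a b ψ S = (2:ℂ)⁻¹ *
      (ψ (Function.update (Function.update S a (S a)) b (S b))
       + ψ (Function.update (Function.update S a (!S a)) b (S b))
       + ψ (Function.update (Function.update S a (S a)) b (!S b))
       - ψ (Function.update (Function.update S a (!S a)) b (!S b))) := by
  have h4 : ((Real.sqrt 2 : ℝ) : ℂ)⁻¹ ^ 4 = (4:ℂ)⁻¹ := by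
    have hc : ((Real.sqrt 2 : ℝ) : ℂ) * ((Real.sqrt 2 : ℝ) : ℂ) = 2 := by
      rw [← Complex.ofReal_mul, Real.mul_self_sqrt (by norm_num)]; norm_num
    rw [show ((Real.sqrt 2 : ℝ) : ℂ)⁻¹ ^ 4 =
      (((Real.sqrt 2 : ℝ) : ℂ) * ((Real.sqrt 2 : ℝ) : ℂ))⁻¹ ^ 2 by rw [mul_inv]; ring, hc]
    norm_num
  simp only [FXgate, Hgate, CZgate, Fintype.sum_bool]
  simp only [Function.update_self, Function.update_of_ne hab, Function.update_of_ne hab.symm,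
    upd3 _ hab, Function.update_idem]
  cases hx : S a <;> cases hy : S b <;>
    · simp [hx, hy]
      ring_nf
      rw [h4]
      ring
open scoped Classical in
lemma pow_edgeCount_symmDiff {n : ℕ} (E F : Finset (Sym2 (Fin n))) (T : Fin n → Bool) :
    (-1:ℂ)^(edgeCount (symmDiff E F) T) = (-1)^(edgeCount E T + edgeCount F T) := by
  unfold edgeCount
  set p : Sym2 (Fin n) → Prop := fun e => ∀ v ∈ e, T v = true with hp
  have hfilter : (symmDiff E F).filter p = symmDiff (E.filter p) (F.filter p) := by
    ext e
    simp only [symmDiff_def, Finset.sup_eq_union, Finset.mem_union, Finset.mem_sdiff,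
      Finset.mem_filter]
    tauto
  rw [hfilter]
  set s := E.filter p
  set t := F.filter p
  have hdsj : Disjoint (s \ t) (t \ s) := disjoint_sdiff_sdiff
  have hcard : (symmDiff s t).card + 2 * (s ∩ t).card = s.card + t.card := by
    rw [symmDiff_def, Finset.sup_eq_union, Finset.card_union_of_disjoint hdsj]
    have h1 := Finset.card_sdiff_add_card_inter s t
    have h2 := Finset.card_sdiff_add_card_inter t s
    rw [Finset.inter_comm t s] at h2
    omega
  rw [← hcard, pow_add, pow_mul, neg_one_sq, one_pow, mul_one]

open scoped Classical in
lemma edgeCount_inter {n : ℕ} (S₁ S₂ : Finset (Fin n)) (hdisj : Disjoint S₁ S₂)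
    (T : Fin n → Bool) :
    edgeCount ((S₁ ×ˢ S₂).image fun p => s(p.1, p.2)) T =
      (S₁.filter fun v => T v = true).card * (S₂.filter fun v => T v = true).card := by
  unfold edgeCount
  rw [Finset.filter_image]
  have hset : ((S₁ ×ˢ S₂).filter fun a => ∀ v ∈ s(a.1, a.2), T v = true) =
      (S₁.filter fun v => T v = true) ×ˢ (S₂.filter fun v => T v = true) := by
    ext q
    simp only [Finset.mem_filter, Finset.mem_product, Sym2.ball]
    tauto
  rw [hset, Finset.card_image_of_injOn, Finset.card_product]
  intro q hq r hr h
  simp only [Finset.coe_product, Set.mem_prod, Finset.mem_coe, Finset.mem_filter] at hq hr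
  rcases Sym2.eq_iff.mp h with ⟨h1, h2⟩ | ⟨h1, h2⟩
  · exact Prod.ext h1 h2
  · exact absurd (h1 ▸ hr.2.1) (Finset.disjoint_left.mp hdisj hq.1.1)
/-- Interset complementation: with two ancilla qubits `a`, `b` prepared in `|+⟩`, the
circuit `(∏_{v ∈ S₁} CZ_{a,v})(∏_{u ∈ S₂} CZ_{b,u}) ∘ FX_{a,b} ∘
(∏_{v ∈ S₁} CZ_{a,v})(∏_{u ∈ S₂} CZ_{b,u})` complements all edges between the disjoint
sets `S₁` and `S₂` and returns the ancillas to `|+⟩`, unentangled. -/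
theorem stmt13 {n : ℕ} (E : Finset (Sym2 (Fin n))) (S₁ S₂ : Finset (Fin n))
    (hdisj : Disjoint S₁ S₂) :
    (fun ψ : QState (n + 2) =>
        (CZprod (⟨n, by omega⟩ : Fin (n + 2)) (S₁.image (Fin.castAdd 2)) *
            CZprod (⟨n + 1, by omega⟩ : Fin (n + 2)) (S₂.image (Fin.castAdd 2)))
          (FXgate (⟨n, by omega⟩ : Fin (n + 2)) (⟨n + 1, by omega⟩ : Fin (n + 2))
            ((CZprod (⟨n, by omega⟩ : Fin (n + 2)) (S₁.image (Fin.castAdd 2)) *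
                CZprod (⟨n + 1, by omega⟩ : Fin (n + 2)) (S₂.image (Fin.castAdd 2))) ψ)))
      (fun S => graphState E (fun v => S (Fin.castAdd 2 v)) *
        ((Real.sqrt 2 : ℝ) : ℂ)⁻¹ * ((Real.sqrt 2 : ℝ) : ℂ)⁻¹) =
    fun S =>
      graphState (symmDiff E ((S₁ ×ˢ S₂).image fun p => s(p.1, p.2)))
          (fun v => S (Fin.castAdd 2 v)) *
        ((Real.sqrt 2 : ℝ) : ℂ)⁻¹ * ((Real.sqrt 2 : ℝ) : ℂ)⁻¹ := by
  classical
  set a : Fin (n + 2) := ⟨n, by omega⟩ with ha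
  set b : Fin (n + 2) := ⟨n + 1, by omega⟩ with hb
  have hab : a ≠ b := by simp [ha, hb, Fin.ext_iff]
  have hva : ∀ v : Fin n, Fin.castAdd 2 v ≠ a := by
    intro v h
    have h2 : (v : ℕ) = n := by simpa [ha] using congrArg Fin.val h
    have := v.isLt; omega
  have hvb : ∀ v : Fin n, Fin.castAdd 2 v ≠ b := by
    intro v h
    have h2 : (v : ℕ) = n + 1 := by simpa [hb] using congrArg Fin.val h
    have := v.isLt; omega
  have hinj : ∀ (A : Finset (Fin n)), ∀ u ∈ A, ∀ w ∈ A,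
      Fin.castAdd 2 u = Fin.castAdd 2 w → u = w :=
    fun A u _ w _ h => Fin.castAdd_injective n 2 h
  have hms : ∀ (x : Bool) (A : Finset (Fin n)) (S' : Fin (n + 2) → Bool),
      (∏ v ∈ A, (if x && S' (Fin.castAdd 2 v) then (-1:ℂ) else 1)) =
        msign x ((A.filter fun v => S' (Fin.castAdd 2 v) = true).card) := by
    intro x A S'
    cases x
    · simp [msign]
    · simp only [Bool.true_and, msign, if_true]
      rw [Finset.prod_ite (f := fun _ => (-1:ℂ)) (g := fun _ => 1)]
      simp [Finset.prod_const]
  have layer : ∀ (ψ : QState (n + 2)) (S' : Fin (n + 2) → Bool),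
      (CZprod a (S₁.image (Fin.castAdd 2)) * CZprod b (S₂.image (Fin.castAdd 2))) ψ S' =
        msign (S' a) ((S₁.filter fun v => S' (Fin.castAdd 2 v) = true).card) *
          (msign (S' b) ((S₂.filter fun v => S' (Fin.castAdd 2 v) = true).card) * ψ S') := by
    intro ψ S'
    rw [end_mul_apply, CZprod_apply, CZprod_apply,
      Finset.prod_image (hinj S₁), Finset.prod_image (hinj S₂), hms, hms]
  have e1 : ∀ (S' : Fin (n + 2) → Bool) (t : Bool) (v : Fin n),
      Function.update S' a t (Fin.castAdd 2 v) = S' (Fin.castAdd 2 v) :=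
    fun S' t v => Function.update_of_ne (hva v) _ _
  have e2 : ∀ (S' : Fin (n + 2) → Bool) (t : Bool) (v : Fin n),
      Function.update S' b t (Fin.castAdd 2 v) = S' (Fin.castAdd 2 v) :=
    fun S' t v => Function.update_of_ne (hvb v) _ _
  funext S
  simp only
  rw [layer, FX_apply a b hab]
  simp only [layer]
  simp only [e1, e2, Function.update_self, Function.update_of_ne hab, Function.update_of_ne hab.symm]
  set T : Fin n → Bool := fun v => S (Fin.castAdd 2 v) with hT
  set k₁ := (S₁.filter fun v => T v = true).card with hk1
  set k₂ := (S₂.filter fun v => T v = true).card with hk2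
  have hE : (-1:ℂ)^(edgeCount (symmDiff E ((S₁ ×ˢ S₂).image fun p => s(p.1, p.2))) T) =
      (-1:ℂ)^(k₁*k₂) * (-1:ℂ)^(edgeCount E T) := by
    rw [pow_edgeCount_symmDiff, pow_add, edgeCount_inter _ _ hdisj, mul_comm]
  have key := msign_key (S a) (S b) k₁ k₂
  simp only [graphState]
  rw [hE]
  linear_combination ((-1:ℂ)^(edgeCount E T) * (((Real.sqrt 2)⁻¹ ^ n : ℝ) : ℂ) *
    ((Real.sqrt 2 : ℝ) : ℂ)⁻¹ * ((Real.sqrt 2 : ℝ) : ℂ)⁻¹) * key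
end

section
/- Vertex comparison for non-adjacent vertices: let E be an edge set on Fin n and a ≠ b vertices with s(a,b) ∉ E. Then: (i) if N(a) \ {a} = N(b) \ {b} and (s(a,a) ∈ E ↔ s(b,b) ∈ E), then X_a X_b |G_E⟩ = |G_E⟩; (ii) if N(a) \ {a} = N(b) \ {b} but exactly one of a, b has a self-loop, then X_a X_b |G_E⟩ = −|G_E⟩; (iii) if there exists a vertex u ∉ {a, b} with u ∈ N(a) Δ N(b) (symmetric difference), then ⟨G_E, X_a X_b |G_E⟩⟩ = 0. -/
open Finset

namespace S16
section
variable {n : ℕ}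

noncomputable def chi (e : Sym2 (Fin n)) (S : Fin n → Bool) : ℂ :=
  if ∀ v ∈ e, S v = true then -1 else 1

lemma chi_sq (e : Sym2 (Fin n)) (S : Fin n → Bool) : chi e S * chi e S = 1 := by
  unfold chi; split <;> norm_num

lemma neg_one_pow_edgeCount (E : Finset (Sym2 (Fin n))) (S : Fin n → Bool) :
    (-1 : ℂ) ^ edgeCount E S = ∏ e ∈ E, chi e S := by
  classical
  unfold edgeCount chi
  rw [Finset.prod_ite, Finset.prod_const, Finset.prod_const, one_pow, mul_one]

lemma chi_pair (u v : Fin n) (S : Fin n → Bool) :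
    chi s(u, v) S = if S u && S v then -1 else 1 := by
  unfold chi
  congr 1
  simp [Sym2.mem_iff, Bool.and_eq_true, eq_iff_iff]

lemma chi_congr (e : Sym2 (Fin n)) {S S' : Fin n → Bool}
    (h : ∀ v ∈ e, S v = S' v) : chi e S = chi e S' := by
  unfold chi
  congr 1
  simp only [eq_iff_iff]
  constructor <;> intro hh w hw
  · rw [← h w hw]; exact hh w hw
  · rw [h w hw]; exact hh w hw

def TT (a b : Fin n) (S : Fin n → Bool) : Fin n → Bool :=
  Function.update (Function.update S a (!S a)) b (!S b)

lemma TT_a {a b : Fin n} {S : Fin n → Bool} (hab : a ≠ b) : TT a b S a = !S a := by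
  simp [TT, Function.update_of_ne hab, Function.update_self]

lemma TT_b {a b : Fin n} {S : Fin n → Bool} : TT a b S b = !S b := by simp [TT]

lemma TT_other {a b u : Fin n} {S : Fin n → Bool} (hua : u ≠ a) (hub : u ≠ b) :
    TT a b S u = S u := by
  simp [TT, Function.update_of_ne hua, Function.update_of_ne hub]

lemma TT_comm {a b : Fin n} {S : Fin n → Bool} (hab : a ≠ b) : TT a b S = TT b a S := by
  unfold TT; rw [Function.update_comm hab]

lemma Xgate_Xgate {a b : Fin n} (hab : a ≠ b) (ψ : (Fin n → Bool) → ℂ) (S : Fin n → Bool) :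
    Xgate a (Xgate b ψ) S = ψ (TT a b S) := by
  unfold Xgate TT
  rw [Function.update_of_ne (Ne.symm hab) (!S a) S]

noncomputable def sg (a b : Fin n) (e : Sym2 (Fin n)) (S : Fin n → Bool) : ℂ :=
  chi e (TT a b S) * chi e S

lemma sg_sq {a b : Fin n} {e : Sym2 (Fin n)} {S : Fin n → Bool} :
    sg a b e S * sg a b e S = 1 := by
  unfold sg
  calc chi e (TT a b S) * chi e S * (chi e (TT a b S) * chi e S)
      = (chi e (TT a b S) * chi e (TT a b S)) * (chi e S * chi e S) := by ring
    _ = 1 := by rw [chi_sq, chi_sq, one_mul]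

lemma sg_comm {a b : Fin n} {e : Sym2 (Fin n)} {S : Fin n → Bool} (hab : a ≠ b) :
    sg a b e S = sg b a e S := by
  unfold sg; rw [TT_comm hab]

lemma sg_not_mem {a b : Fin n} {e : Sym2 (Fin n)} {S : Fin n → Bool}
    (ha : a ∉ e) (hb : b ∉ e) : sg a b e S = 1 := by
  have h : chi e (TT a b S) = chi e S :=
    chi_congr e fun w hw => TT_other (fun h => ha (h ▸ hw)) (fun h => hb (h ▸ hw))
  rw [sg, h, chi_sq]

lemma sg_loop_a {a b : Fin n} {S : Fin n → Bool} (hab : a ≠ b) :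
    sg a b s(a, a) S = -1 := by
  unfold sg
  rw [chi_pair, chi_pair, TT_a hab]
  cases S a <;> norm_num

lemma sg_loop_b {a b : Fin n} {S : Fin n → Bool} :
    sg a b s(b, b) S = -1 := by
  unfold sg
  rw [chi_pair, chi_pair, TT_b]
  cases S b <;> norm_num

lemma sg_edge_a {a b u : Fin n} {S : Fin n → Bool} (hab : a ≠ b)
    (hua : u ≠ a) (hub : u ≠ b) :
    sg a b s(a, u) S = if S u then -1 else 1 := by
  unfold sg
  rw [chi_pair, chi_pair, TT_a hab, TT_other hua hub]
  cases S a <;> cases S u <;> norm_num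

lemma sg_edge_b {a b u : Fin n} {S : Fin n → Bool}
    (hua : u ≠ a) (hub : u ≠ b) :
    sg a b s(b, u) S = if S u then -1 else 1 := by
  unfold sg
  rw [chi_pair, chi_pair, TT_b, TT_other hua hub]
  cases S b <;> cases S u <;> norm_num

lemma classify {a b : Fin n} (e : Sym2 (Fin n)) (he : e ≠ s(a, b)) :
    (a ∉ e ∧ b ∉ e) ∨ e = s(a, a) ∨ e = s(b, b) ∨
      (∃ w, w ≠ a ∧ w ≠ b ∧ e = s(a, w)) ∨ (∃ w, w ≠ a ∧ w ≠ b ∧ e = s(b, w)) := by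
  induction e using Sym2.inductionOn with
  | hf x y =>
    rcases eq_or_ne a x with rfl | hxa
    · rcases eq_or_ne a y with rfl | hya
      · right; left; rfl
      · rcases eq_or_ne b y with rfl | hyb
        · exact absurd rfl he
        · right; right; right; left; exact ⟨y, hya.symm, hyb.symm, rfl⟩
    · rcases eq_or_ne b x with rfl | hxb
      · rcases eq_or_ne b y with rfl | hyb
        · right; right; left; rfl
        · rcases eq_or_ne a y with rfl | hya
          · exact absurd Sym2.eq_swap he
          · right; right; right; right; exact ⟨y, hya.symm, hyb.symm, rfl⟩
      · rcases eq_or_ne a y with rfl | hya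
        · right; right; right; left; exact ⟨x, hxa.symm, hxb.symm, Sym2.eq_swap⟩
        · rcases eq_or_ne b y with rfl | hyb
          · right; right; right; right; exact ⟨x, hxa.symm, hxb.symm, Sym2.eq_swap⟩
          · left
            constructor <;> rw [Sym2.mem_iff] <;> push_neg <;>
              exact ⟨by tauto, by tauto⟩

lemma swap_pair_a {a b w : Fin n} (hwa : w ≠ a) (hwb : w ≠ b) :
    Sym2.map (Equiv.swap a b) s(a, w) = s(b, w) := by
  rw [Sym2.map_pair_eq, Equiv.swap_apply_left, Equiv.swap_apply_of_ne_of_ne hwa hwb]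

lemma swap_pair_b {a b w : Fin n} (hwa : w ≠ a) (hwb : w ≠ b) :
    Sym2.map (Equiv.swap a b) s(b, w) = s(a, w) := by
  rw [Sym2.map_pair_eq, Equiv.swap_apply_right, Equiv.swap_apply_of_ne_of_ne hwa hwb]

lemma swap_fix {a b : Fin n} {e : Sym2 (Fin n)} (ha : a ∉ e) (hb : b ∉ e) :
    Sym2.map (Equiv.swap a b) e = e := by
  induction e using Sym2.inductionOn with
  | hf x y =>
    rw [Sym2.mem_iff] at ha hb
    push_neg at ha hb
    rw [Sym2.map_pair_eq,
      Equiv.swap_apply_of_ne_of_ne (Ne.symm ha.1) (Ne.symm hb.1),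
      Equiv.swap_apply_of_ne_of_ne (Ne.symm ha.2) (Ne.symm hb.2)]

lemma hswap_of_hN {E : Finset (Sym2 (Fin n))} {a b : Fin n}
    (hN : (nbhd E a).erase a = (nbhd E b).erase b) {u : Fin n}
    (hua : u ≠ a) (hub : u ≠ b) : (s(a, u) ∈ E ↔ s(b, u) ∈ E) := by
  have h := Finset.ext_iff.mp hN u
  simp only [Finset.mem_erase, nbhd, Finset.mem_filter, Finset.mem_univ, true_and,
    hua, hub, ne_eq, not_false_eq_true] at h
  rw [Sym2.eq_swap (a := a) (b := u), Sym2.eq_swap (a := b) (b := u)]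
  exact h

lemma prod_sg_one {E : Finset (Sym2 (Fin n))} {a b : Fin n} (hab : a ≠ b)
    (hnadj : s(a, b) ∉ E) (hN : (nbhd E a).erase a = (nbhd E b).erase b)
    (S : Fin n → Bool) :
    ∏ e ∈ (E.erase s(a, a)).erase s(b, b), sg a b e S = 1 := by
  classical
  set E' := (E.erase s(a, a)).erase s(b, b) with hE'
  have hmemE' : ∀ e, e ∈ E' ↔ e ≠ s(b, b) ∧ e ≠ s(a, a) ∧ e ∈ E := by
    intro e; simp [hE', Finset.mem_erase, and_assoc]
  refine Finset.prod_involution (fun e _ => Sym2.map (Equiv.swap a b) e) ?_ ?_ ?_ ?_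
  · -- products are 1
    intro e he
    show sg a b e S * sg a b (Sym2.map (Equiv.swap a b) e) S = 1
    obtain ⟨heb, hea, heE⟩ := (hmemE' e).mp he
    rcases classify e (fun h => hnadj (h ▸ heE)) with ⟨ha, hb⟩ | h | h | ⟨w, hwa, hwb, rfl⟩ |
        ⟨w, hwa, hwb, rfl⟩
    · rw [swap_fix ha hb, sg_not_mem ha hb]; norm_num
    · exact absurd h hea
    · exact absurd h heb
    · rw [swap_pair_a hwa hwb, sg_edge_a hab hwa hwb, sg_edge_b hwa hwb]
      cases S w <;> norm_num
    · rw [swap_pair_b hwa hwb, sg_edge_b hwa hwb, sg_edge_a hab hwa hwb]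
      cases S w <;> norm_num
  · -- nonfixed if sg ≠ 1
    intro e he hne
    show Sym2.map (Equiv.swap a b) e ≠ e
    obtain ⟨heb, hea, heE⟩ := (hmemE' e).mp he
    rcases classify e (fun h => hnadj (h ▸ heE)) with ⟨ha, hb⟩ | h | h | ⟨w, hwa, hwb, rfl⟩ |
        ⟨w, hwa, hwb, rfl⟩
    · exact absurd (sg_not_mem ha hb) hne
    · exact absurd h hea
    · exact absurd h heb
    · rw [swap_pair_a hwa hwb]
      simp only [ne_eq, Sym2.eq_iff]
      simp [hab, hwa, hwb, Ne.symm hab, Ne.symm hwa, Ne.symm hwb]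
    · rw [swap_pair_b hwa hwb]
      simp only [ne_eq, Sym2.eq_iff]
      simp [hab, hwa, hwb, Ne.symm hab, Ne.symm hwa, Ne.symm hwb]
  · -- mem
    intro e he
    show Sym2.map (Equiv.swap a b) e ∈ E'
    obtain ⟨heb, hea, heE⟩ := (hmemE' e).mp he
    rcases classify e (fun h => hnadj (h ▸ heE)) with ⟨ha, hb⟩ | h | h | ⟨w, hwa, hwb, rfl⟩ |
        ⟨w, hwa, hwb, rfl⟩
    · rw [swap_fix ha hb]; exact he
    · exact absurd h hea
    · exact absurd h heb
    · rw [swap_pair_a hwa hwb, hmemE']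
      refine ⟨?_, ?_, (hswap_of_hN hN hwa hwb).mp heE⟩
      · simp [Sym2.eq_iff, hab, hwa, hwb, Ne.symm hab, Ne.symm hwa, Ne.symm hwb]
      · simp [Sym2.eq_iff, hab, hwa, hwb, Ne.symm hab, Ne.symm hwa, Ne.symm hwb]
    · rw [swap_pair_b hwa hwb, hmemE']
      refine ⟨?_, ?_, (hswap_of_hN hN hwa hwb).mpr heE⟩
      · simp [Sym2.eq_iff, hab, hwa, hwb, Ne.symm hab, Ne.symm hwa, Ne.symm hwb]
      · simp [Sym2.eq_iff, hab, hwa, hwb, Ne.symm hab, Ne.symm hwa, Ne.symm hwb]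
  · -- involutive
    intro e he
    show Sym2.map (Equiv.swap a b) (Sym2.map (Equiv.swap a b) e) = e
    induction e using Sym2.inductionOn with
    | hf x y => simp [Sym2.map_pair_eq, Equiv.swap_apply_self]

lemma prod_sg {E : Finset (Sym2 (Fin n))} {a b : Fin n} (hab : a ≠ b)
    (hnadj : s(a, b) ∉ E) (hN : (nbhd E a).erase a = (nbhd E b).erase b)
    (S : Fin n → Bool) :
    ∏ e ∈ E, sg a b e S =
      (if s(a, a) ∈ E then -1 else 1) * (if s(b, b) ∈ E then (-1 : ℂ) else 1) := by
  classical
  have hne : s(b, b) ≠ s(a, a) := by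
    simp only [ne_eq, Sym2.eq_iff]
    push_neg
    exact ⟨fun h => absurd h hab.symm, fun h => absurd h hab.symm⟩
  have key := prod_sg_one hab hnadj hN S
  by_cases h1 : s(a, a) ∈ E <;> by_cases h2 : s(b, b) ∈ E
  · have h2' : s(b, b) ∈ E.erase s(a, a) := Finset.mem_erase.mpr ⟨hne, h2⟩
    rw [← Finset.mul_prod_erase E _ h1, ← Finset.mul_prod_erase _ _ h2', key,
      sg_loop_a hab, sg_loop_b]
    simp [h1, h2]
  · rw [Finset.erase_eq_of_notMem (fun h => h2 (Finset.mem_erase.mp h).2)] at key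
    rw [← Finset.mul_prod_erase E _ h1, key, sg_loop_a hab]
    simp [h1, h2]
  · rw [Finset.erase_eq_of_notMem h1] at key
    rw [← Finset.mul_prod_erase E _ h2, key, sg_loop_b]
    simp [h1, h2]
  · rw [Finset.erase_eq_of_notMem h1,
      Finset.erase_eq_of_notMem h2] at key
    rw [key]; simp [h1, h2]

lemma gs_TT {E : Finset (Sym2 (Fin n))} {a b : Fin n} (S : Fin n → Bool) :
    graphState E (TT a b S) = (∏ e ∈ E, sg a b e S) * graphState E S := by
  unfold graphState
  rw [neg_one_pow_edgeCount, neg_one_pow_edgeCount]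
  have h : ∏ e ∈ E, chi e (TT a b S) = (∏ e ∈ E, sg a b e S) * ∏ e ∈ E, chi e S := by
    rw [← Finset.prod_mul_distrib]
    refine Finset.prod_congr rfl fun e _ => ?_
    rw [sg, mul_assoc, chi_sq, mul_one]
  rw [h, mul_assoc]

lemma sg_update {a b u : Fin n} {e : Sym2 (Fin n)}
    {S : Fin n → Bool} (hab : a ≠ b) (hua : u ≠ a) (hub : u ≠ b)
    (he_ab : e ≠ s(a, b)) (hea : e ≠ s(a, u)) (heb : e ≠ s(b, u)) :
    sg a b e (Function.update S u (!S u)) = sg a b e S := by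
  rcases classify e he_ab with ⟨ha, hb⟩ | rfl | rfl | ⟨w, hwa, hwb, rfl⟩ | ⟨w, hwa, hwb, rfl⟩
  · rw [sg_not_mem ha hb, sg_not_mem ha hb]
  · rw [sg_loop_a hab, sg_loop_a hab]
  · rw [sg_loop_b, sg_loop_b]
  · have hwu : w ≠ u := fun h => hea (by rw [h])
    rw [sg_edge_a hab hwa hwb, sg_edge_a hab hwa hwb, Function.update_of_ne hwu]
  · have hwu : w ≠ u := fun h => heb (by rw [h])
    rw [sg_edge_b hwa hwb, sg_edge_b hwa hwb, Function.update_of_ne hwu]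

lemma flip_prod {E : Finset (Sym2 (Fin n))} {a b u : Fin n} (hab : a ≠ b)
    (hnadj : s(a, b) ∉ E) (hua : u ≠ a) (hub : u ≠ b)
    (hmem : s(a, u) ∈ E) (hnot : s(b, u) ∉ E) (S : Fin n → Bool) :
    ∏ e ∈ E, sg a b e (Function.update S u (!S u)) = -∏ e ∈ E, sg a b e S := by
  rw [← Finset.mul_prod_erase E _ hmem, ← Finset.mul_prod_erase E _ hmem]
  have h1 : ∏ e ∈ E.erase s(a, u), sg a b e (Function.update S u (!S u)) =
      ∏ e ∈ E.erase s(a, u), sg a b e S := by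
    refine Finset.prod_congr rfl fun e he => ?_
    obtain ⟨hne, heE⟩ := Finset.mem_erase.mp he
    exact sg_update hab hua hub (fun h => hnadj (h ▸ heE)) hne (fun h => hnot (h ▸ heE))
  rw [h1, sg_edge_a hab hua hub, sg_edge_a hab hua hub, Function.update_self]
  cases S u <;> simp

end
end S16


/-- Vertex comparison for non-adjacent vertices `a ≠ b` via the observable `X_a X_b`. -/
theorem stmt16 {n : ℕ} (E : Finset (Sym2 (Fin n))) (a b : Fin n) (hab : a ≠ b)
    (hnadj : s(a, b) ∉ E) :
    (((nbhd E a).erase a = (nbhd E b).erase b ∧ (s(a, a) ∈ E ↔ s(b, b) ∈ E)) →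
      Xgate a (Xgate b (graphState E)) = graphState E) ∧
    (((nbhd E a).erase a = (nbhd E b).erase b ∧ Xor' (s(a, a) ∈ E) (s(b, b) ∈ E)) →
      Xgate a (Xgate b (graphState E)) = fun S => -graphState E S) ∧
    ((∃ u : Fin n, u ≠ a ∧ u ≠ b ∧ Xor' (u ∈ nbhd E a) (u ∈ nbhd E b)) →
      qInner (graphState E) (Xgate a (Xgate b (graphState E))) = 0) := by
  classical
  have conj_gs : ∀ S : Fin n → Bool, (starRingEnd ℂ) (graphState E S) = graphState E S := by
    intro S
    unfold graphState
    rw [map_mul, map_pow, map_neg, map_one, Complex.conj_ofReal]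
  have gs_sq : ∀ S : Fin n → Bool, graphState E S * graphState E S =
      (((Real.sqrt 2)⁻¹ ^ n : ℝ) : ℂ) * (((Real.sqrt 2)⁻¹ ^ n : ℝ) : ℂ) := by
    intro S
    unfold graphState
    have h1 : ((-1 : ℂ) ^ edgeCount E S) * ((-1 : ℂ) ^ edgeCount E S) = 1 := by
      rw [← mul_pow]; norm_num
    calc ((-1 : ℂ) ^ edgeCount E S * (((Real.sqrt 2)⁻¹ ^ n : ℝ) : ℂ)) *
          ((-1 : ℂ) ^ edgeCount E S * (((Real.sqrt 2)⁻¹ ^ n : ℝ) : ℂ))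
        = (((-1 : ℂ) ^ edgeCount E S) * ((-1 : ℂ) ^ edgeCount E S)) *
            ((((Real.sqrt 2)⁻¹ ^ n : ℝ) : ℂ) * (((Real.sqrt 2)⁻¹ ^ n : ℝ) : ℂ)) := by ring
      _ = _ := by rw [h1, one_mul]
  refine ⟨?_, ?_, ?_⟩
  · rintro ⟨hN, hloop⟩
    funext S
    rw [S16.Xgate_Xgate hab, S16.gs_TT, S16.prod_sg hab hnadj hN]
    by_cases h1 : s(a, a) ∈ E
    · have h2 := hloop.mp h1
      simp only [h1, h2, if_true]
      ring
    · have h2 : s(b, b) ∉ E := fun h => h1 (hloop.mpr h)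
      simp only [h1, h2, if_false]
      ring
  · rintro ⟨hN, hloop⟩
    funext S
    show Xgate a (Xgate b (graphState E)) S = -graphState E S
    rw [S16.Xgate_Xgate hab, S16.gs_TT, S16.prod_sg hab hnadj hN]
    rcases hloop with ⟨h1, h2⟩ | ⟨h2, h1⟩
    · simp only [h1, h2, if_true, if_false]
      ring
    · simp only [h1, h2, if_true, if_false]
      ring
  · rintro ⟨u, hua, hub, hxor⟩
    unfold qInner
    have hterm : ∀ S : Fin n → Bool,
        (starRingEnd ℂ) (graphState E S) * Xgate a (Xgate b (graphState E)) S =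
        (((Real.sqrt 2)⁻¹ ^ n : ℝ) : ℂ) * (((Real.sqrt 2)⁻¹ ^ n : ℝ) : ℂ) *
          ∏ e ∈ E, S16.sg a b e S := by
      intro S
      rw [conj_gs, S16.Xgate_Xgate hab, S16.gs_TT]
      calc graphState E S * ((∏ e ∈ E, S16.sg a b e S) * graphState E S)
          = (∏ e ∈ E, S16.sg a b e S) * (graphState E S * graphState E S) := by ring
        _ = _ := by rw [gs_sq]; ring
    have hflip : ∀ S : Fin n → Bool,
        ∏ e ∈ E, S16.sg a b e (Function.update S u (!S u)) = -∏ e ∈ E, S16.sg a b e S := by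
      intro S
      rcases hxor with ⟨hin, hout⟩ | ⟨hin, hout⟩
      · simp only [nbhd, Finset.mem_filter, Finset.mem_univ, true_and] at hin hout
        rw [Sym2.eq_swap] at hin hout
        exact S16.flip_prod hab hnadj hua hub hin hout S
      · simp only [nbhd, Finset.mem_filter, Finset.mem_univ, true_and] at hin hout
        rw [Sym2.eq_swap] at hin hout
        have h1 : ∀ S' : Fin n → Bool,
            ∏ e ∈ E, S16.sg a b e S' = ∏ e ∈ E, S16.sg b a e S' := fun S' =>
          Finset.prod_congr rfl fun e _ => S16.sg_comm hab
        rw [h1, h1]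
        exact S16.flip_prod hab.symm (fun h => hnadj (by rwa [Sym2.eq_swap] at h))
          hub hua hin hout S
    have hzero : ∑ S : Fin n → Bool, ∏ e ∈ E, S16.sg a b e S = 0 := by
      refine Finset.sum_involution (fun S _ => Function.update S u (!S u)) ?_ ?_ ?_ ?_
      · intro S _
        show (∏ e ∈ E, S16.sg a b e S) + ∏ e ∈ E, S16.sg a b e (Function.update S u (!S u)) = 0
        rw [hflip S]
        ring
      · intro S _ _
        show Function.update S u (!S u) ≠ S
        intro h
        have h2 := congrFun h u
        rw [Function.update_self] at h2
        cases hSu : S u <;> rw [hSu] at h2 <;> simp at h2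
      · intro S _
        exact Finset.mem_univ _
      · intro S _
        show Function.update (Function.update S u (!S u)) u
            (!(Function.update S u (!S u)) u) = S
        funext w
        rcases eq_or_ne w u with rfl | hw
        · simp
        · simp [Function.update_of_ne hw]
    calc ∑ S : Fin n → Bool, (starRingEnd ℂ) (graphState E S) *
          Xgate a (Xgate b (graphState E)) S
        = ∑ S : Fin n → Bool, (((Real.sqrt 2)⁻¹ ^ n : ℝ) : ℂ) *
            (((Real.sqrt 2)⁻¹ ^ n : ℝ) : ℂ) * ∏ e ∈ E, S16.sg a b e S :=
          Finset.sum_congr rfl fun S _ => hterm S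
      _ = (((Real.sqrt 2)⁻¹ ^ n : ℝ) : ℂ) * (((Real.sqrt 2)⁻¹ ^ n : ℝ) : ℂ) *
            ∑ S : Fin n → Bool, ∏ e ∈ E, S16.sg a b e S := by rw [Finset.mul_sum]
      _ = 0 := by rw [hzero, mul_zero]
end
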